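/- Let k be a field and fix 2n×2n block matrices Ω_j = (0,0,1,0; 0,0,0,1; 1,0,A'_j,w_j; 0,1,0,A_j) (4×4 blocks of size n) for j = 1,...,m, and similarly Ω'_j with w'_j in place of w_j. Suppose there exist n×n matrices z_1,z_2,z_3,z_4 and u_0,...,u_{m+1} with Θ = (1,z_1,0,z_2; 0,1,0,0; 0,z_3,1,z_4; 0,0,0,1) and Υ_k = (1,u_k; 0,1) such that Θ∘Ω_1 = Ω'_1∘(Υ_1 ⊕ Υ_2) and (Υ_{j-1} ⊕ Υ_j)∘Ω_j = Ω'_j∘(Υ_j ⊕ Υ_{j+1}) for 2 ≤ j ≤ m, and the top compatibility Υ_0·Ψ = Ψ'·Θ with Ψ = Ψ' = (0,0,1,0; 0,0,0,1). Then u_{j+1} = u_{j-1} for 2 ≤ j ≤ m, z_2 = z_3 = 0, z_4 = u_0 = u_1, z_1 = u_2, and w'_j = w_j + u_j·A_j - A'_j·u_{j+1} for all 1 ≤ j ≤ m. -/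

import Mathlib

open Matrix

/-- The `4n × 4n` block matrix `Ω = (0,0,1,0; 0,0,0,1; 1,0,a',w; 0,1,0,a)`
(blocks of size `n`). -/
def Om {k : Type*} [Field k] {n : ℕ} (a a' w : Matrix (Fin n) (Fin n) k) :
    Matrix ((Fin n ⊕ Fin n) ⊕ (Fin n ⊕ Fin n)) ((Fin n ⊕ Fin n) ⊕ (Fin n ⊕ Fin n)) k :=
  fromBlocks 0 1 1 (fromBlocks a' w 0 a)

/-- The `4n × 4n` block matrix `Θ = (1,z₁,0,z₂; 0,1,0,0; 0,z₃,1,z₄; 0,0,0,1)`. -/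
def Th {k : Type*} [Field k] {n : ℕ} (z1 z2 z3 z4 : Matrix (Fin n) (Fin n) k) :
    Matrix ((Fin n ⊕ Fin n) ⊕ (Fin n ⊕ Fin n)) ((Fin n ⊕ Fin n) ⊕ (Fin n ⊕ Fin n)) k :=
  fromBlocks (fromBlocks 1 z1 0 1) (fromBlocks 0 z2 0 0)
    (fromBlocks 0 z3 0 0) (fromBlocks 1 z4 0 1)

/-- The `2n × 2n` block matrix `Υ = (1, u; 0, 1)`. -/
def Up {k : Type*} [Field k] {n : ℕ} (u : Matrix (Fin n) (Fin n) k) :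
    Matrix (Fin n ⊕ Fin n) (Fin n ⊕ Fin n) k :=
  fromBlocks 1 u 0 1

/-- The `4n × 4n` block diagonal `Υa ⊕ Υb`. -/
def Ups {k : Type*} [Field k] {n : ℕ} (a b : Matrix (Fin n) (Fin n) k) :
    Matrix ((Fin n ⊕ Fin n) ⊕ (Fin n ⊕ Fin n)) ((Fin n ⊕ Fin n) ⊕ (Fin n ⊕ Fin n)) k :=
  fromBlocks (Up a) 0 0 (Up b)

/-- The `2n × 4n` block matrix `Ψ = (0,0,1,0; 0,0,0,1)`. -/
def PsiTop {k : Type*} [Field k] (n : ℕ) :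
    Matrix (Fin n ⊕ Fin n) ((Fin n ⊕ Fin n) ⊕ (Fin n ⊕ Fin n)) k :=
  fromCols 0 1

/-- Isomorphism of extensions in the rank-`n` sheaf category of the `(2,m)` torus link:
if `Θ∘Ω₁ = Ω'₁∘(Υ₁ ⊕ Υ₂)`, `(Υ_{j-1} ⊕ Υ_j)∘Ω_j = Ω'_j∘(Υ_j ⊕ Υ_{j+1})` for `2 ≤ j ≤ m`,
and `Υ₀·Ψ = Ψ·Θ`, then `u_{j+1} = u_{j-1}` for `2 ≤ j ≤ m`, `z₂ = z₃ = 0`,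
`z₄ = u₀ = u₁`, `z₁ = u₂`, and `w'ⱼ = wⱼ + uⱼ·Aⱼ - A'ⱼ·u_{j+1}` for all `1 ≤ j ≤ m`. -/
theorem stmt_15 {k : Type*} [Field k] {n m : ℕ} (hm : 1 ≤ m)
    (A A' w w' u : ℕ → Matrix (Fin n) (Fin n) k)
    (z1 z2 z3 z4 : Matrix (Fin n) (Fin n) k)
    (h1 : Th z1 z2 z3 z4 * Om (A 1) (A' 1) (w 1) =
      Om (A 1) (A' 1) (w' 1) * Ups (u 1) (u 2))
    (h2 : ∀ j, 2 ≤ j → j ≤ m →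
      Ups (u (j - 1)) (u j) * Om (A j) (A' j) (w j) =
        Om (A j) (A' j) (w' j) * Ups (u j) (u (j + 1)))
    (htop : Up (u 0) * PsiTop n = PsiTop n * Th z1 z2 z3 z4) :
    (∀ j, 2 ≤ j → j ≤ m → u (j + 1) = u (j - 1)) ∧
    z2 = 0 ∧ z3 = 0 ∧ z4 = u 0 ∧ u 0 = u 1 ∧ z1 = u 2 ∧
    (∀ j, 1 ≤ j → j ≤ m → w' j = w j + u j * A j - A' j * u (j + 1)) := by
  replace htop : @HMul.hMul _ _ (Matrix _ _ k) Matrix.instHMulOfFintypeOfMulOfAddCommMonoid (Up (u 0)) (PsiTop n) = @HMul.hMul _ _ (Matrix _ _ k) Matrix.instHMulOfFintypeOfMulOfAddCommMonoid (PsiTop n) (Th z1 z2 z3 z4) := htop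
  simp only [Om, Th, Up, Ups, PsiTop, fromBlocks_multiply, Matrix.fromBlocks_add,
    Matrix.mul_fromCols, Matrix.fromCols_mul_fromBlocks, fromCols_inj.eq_iff,
    ← Matrix.fromBlocks_zero, fromBlocks_inj,
    mul_zero, zero_mul, mul_one, one_mul, add_zero, zero_add] at h1 htop
  obtain ⟨⟨-, hz2, -, -⟩, ⟨-, hz1, -, -⟩, ⟨-, hz4, -, -⟩, -, hw1, -, -⟩ := h1
  obtain ⟨⟨-, hz3, -, -⟩, -, hu0, -, -⟩ := htop
  have hz3' : z3 = 0 := hz3.symm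
  have hz1' : z1 = u 2 := by rw [hz2, zero_mul, add_zero] at hz1; exact hz1
  have key : ∀ j, 2 ≤ j → j ≤ m →
      u (j + 1) = u (j - 1) ∧ w' j = w j + u j * A j - A' j * u (j + 1) := by
    intro j hj2 hjm
    have h := h2 j hj2 hjm
    simp only [Om, Up, Ups, fromBlocks_multiply, Matrix.fromBlocks_add,
      ← Matrix.fromBlocks_zero, fromBlocks_inj,
      mul_zero, zero_mul, mul_one, one_mul, add_zero, zero_add] at h
    obtain ⟨-, ⟨-, hu, -, -⟩, -, -, hw, -, -⟩ := h
    exact ⟨hu.symm, eq_sub_of_add_eq' hw.symm⟩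
  refine ⟨fun j hj2 hjm => (key j hj2 hjm).1, hz2, hz3', hu0.symm, hu0.trans hz4, hz1', ?_⟩
  intro j hj1 hjm
  rcases Nat.lt_or_ge j 2 with h | h
  · interval_cases j
    rw [hz3', hz4, zero_add] at hw1
    exact eq_sub_of_add_eq' hw1.symm
  · exact (key j h hjm).2
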